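/- The minimum, over all TPG_{k,c}-monochromatic tilings T of V, of the average-case objective PAR of T equals 1 + (c³ − c)/2^{2k+1}. -/

import Mathlib

open Finset

/-- The value space `{0,…,2^k−1} × {0,…,2^k−1}`. -/
def Vk (k : ℕ) : Finset (ℕ × ℕ) := Finset.range (2 ^ k) ×ˢ Finset.range (2 ^ k)

/-- A tiling of `Vk k`: a finite collection of nonempty rectangles partitioning `Vk k`. -/
def IsTiling (k : ℕ) (T : Finset (Finset (ℕ × ℕ))) : Prop :=
  (∀ R ∈ T, ∃ S S' : Finset ℕ, R = S ×ˢ S') ∧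
    (∀ R ∈ T, R.Nonempty) ∧ (∀ R ∈ T, R ⊆ Vk k) ∧ ∀ x ∈ Vk k, ∃! R, R ∈ T ∧ x ∈ R

/-- `f`-monochromaticity of a tiling. -/
def Mono {β : Type} (f : ℕ × ℕ → β) (T : Finset (Finset (ℕ × ℕ))) : Prop :=
  ∀ R ∈ T, ∀ x ∈ R, ∀ y ∈ R, f x = f y

/-- The tile of `T` containing `x` (union of all tiles containing `x`; for a
tiling this is exactly the unique tile containing `x`). -/
def tileOf (T : Finset (Finset (ℕ × ℕ))) (x : ℕ × ℕ) : Finset (ℕ × ℕ) :=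
  (T.filter fun R => x ∈ R).sup id

/-- The ideal region of `x`: the level set of `f x` inside `Vk k`. -/
def ideal {β : Type} [DecidableEq β] (k : ℕ) (f : ℕ × ℕ → β) (x : ℕ × ℕ) : Finset (ℕ × ℕ) :=
  (Vk k).filter fun y => f y = f x

/-- Average-case objective PAR of a tiling w.r.t. the uniform distribution. -/
def avgObjPAR {β : Type} [DecidableEq β] (k : ℕ) (f : ℕ × ℕ → β)
    (T : Finset (Finset (ℕ × ℕ))) : ℚ :=
  (∑ x ∈ Vk k, ((ideal k f x).card : ℚ) / ((tileOf T x).card : ℚ)) / 2 ^ (2 * k)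

/-- Average-case PAR with respect to party 1. -/
def avgPAR1 {β : Type} [DecidableEq β] (k : ℕ) (f : ℕ × ℕ → β)
    (T : Finset (Finset (ℕ × ℕ))) : ℚ :=
  (∑ x ∈ Vk k,
      (((Finset.range (2 ^ k)).filter fun y => f (x.1, y) = f x).card : ℚ) /
        (((Finset.range (2 ^ k)).filter fun y => (x.1, y) ∈ tileOf T x).card : ℚ)) /
    2 ^ (2 * k)

/-- Average-case PAR with respect to party 2. -/
def avgPAR2 {β : Type} [DecidableEq β] (k : ℕ) (f : ℕ × ℕ → β)
    (T : Finset (Finset (ℕ × ℕ))) : ℚ :=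
  (∑ x ∈ Vk k,
      (((Finset.range (2 ^ k)).filter fun y => f (y, x.2) = f x).card : ℚ) /
        (((Finset.range (2 ^ k)).filter fun y => (y, x.2) ∈ tileOf T x).card : ℚ)) /
    2 ^ (2 * k)

/-- The millionaires function: `1` if `x1 ≥ x2`, else `2`. -/
def Mil (x : ℕ × ℕ) : ℕ := if x.2 ≤ x.1 then 1 else 2

/-- The second-price auction function. -/
def Auc (x : ℕ × ℕ) : ℕ × ℕ := if x.2 ≤ x.1 then (1, x.2) else (2, x.1)

/-- Translate a tile by `(a, a)`. -/
def shiftTile (a : ℕ) (R : Finset (ℕ × ℕ)) : Finset (ℕ × ℕ) :=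
  R.image fun p => (p.1 + a, p.2 + a)

/-- The bisection-protocol tiling `B_k`. -/
def Btile : ℕ → Finset (Finset (ℕ × ℕ))
  | 0 => {{(0, 0)}}
  | j + 1 =>
    Btile j ∪ (Btile j).image (shiftTile (2 ^ j)) ∪
      {Finset.range (2 ^ j) ×ˢ Finset.Ico (2 ^ j) (2 ^ (j + 1)),
        Finset.Ico (2 ^ j) (2 ^ (j + 1)) ×ˢ Finset.range (2 ^ j)}

/-- The bounded-bisection-auction tiling `T_{c,i}`. -/
def BBA : ℕ → ℕ → Finset (Finset (ℕ × ℕ))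
  | 0, i =>
    (Finset.range (2 ^ i)).image (fun p => Finset.Ico p (2 ^ i) ×ˢ ({p} : Finset ℕ)) ∪
      (Finset.range (2 ^ i - 1)).image fun p => ({p} : Finset ℕ) ×ˢ Finset.Ico (p + 1) (2 ^ i)
  | c + 1, i =>
    BBA c i ∪ (BBA c i).image (shiftTile (2 ^ (c + i))) ∪
      (Finset.range (2 ^ (c + i))).image
        (fun j => Finset.Ico (2 ^ (c + i)) (2 ^ (c + i + 1)) ×ˢ ({j} : Finset ℕ)) ∪
      (Finset.range (2 ^ (c + i))).image fun j =>
        ({j} : Finset ℕ) ×ˢ Finset.Ico (2 ^ (c + i)) (2 ^ (c + i + 1))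

/-- The public-good function: `true` iff `x1 + x2 ≥ 2^k − 1` ("Build"). -/
def PG (k : ℕ) (x : ℕ × ℕ) : Bool := decide (2 ^ k - 1 ≤ x.1 + x.2)

/-- The truthful public-good function: `none` = "Do Not Build". -/
def TPG (c : ℕ) (x : ℕ × ℕ) : Option (ℕ × ℕ) :=
  if x.1 + x.2 < c then none else some (c - x.2, c - x.1)

/-- The tiling of `Vk k` into singleton cells (sealed-bid auction). -/
def sealedTiling (k : ℕ) : Finset (Finset (ℕ × ℕ)) :=
  (Vk k).image fun x => ({x} : Finset (ℕ × ℕ))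

namespace Stmt7Aux

noncomputable def pick (R : Finset (ℕ × ℕ)) : ℕ × ℕ :=
  if h : R.Nonempty then h.choose else (0, 0)

lemma pick_mem {R : Finset (ℕ × ℕ)} (h : R.Nonempty) : pick R ∈ R := by
  rw [pick, dif_pos h]; exact h.choose_spec

lemma mem_Vk {k : ℕ} {x : ℕ × ℕ} : x ∈ Vk k ↔ x.1 < 2 ^ k ∧ x.2 < 2 ^ k := by
  simp [Vk]

section generic

variable {β : Type} [DecidableEq β] {k : ℕ} {f : ℕ × ℕ → β} {T : Finset (Finset (ℕ × ℕ))}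

lemma ideal_congr {x y : ℕ × ℕ} (h : f x = f y) : ideal k f x = ideal k f y := by
  simp [ideal, h]

lemma tileOf_eq (hT : IsTiling k T) {x : ℕ × ℕ} {R : Finset (ℕ × ℕ)}
    (hx : x ∈ Vk k) (hR : R ∈ T) (hxR : x ∈ R) : tileOf T x = R := by
  obtain ⟨-, -, -, h4⟩ := hT
  obtain ⟨R₀, -, hu⟩ := h4 x hx
  have hfilter : T.filter (fun S => x ∈ S) = {R} := by
    ext S
    simp only [Finset.mem_filter, Finset.mem_singleton]
    constructor
    · rintro ⟨hS, hxS⟩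
      rw [hu S ⟨hS, hxS⟩, hu R ⟨hR, hxR⟩]
    · rintro rfl; exact ⟨hR, hxR⟩
  rw [tileOf, hfilter, Finset.sup_singleton, id]

lemma tileOf_mem (hT : IsTiling k T) {x : ℕ × ℕ} (hx : x ∈ Vk k) :
    tileOf T x ∈ T ∧ x ∈ tileOf T x := by
  obtain ⟨R, ⟨hRT, hxR⟩, -⟩ := hT.2.2.2 x hx
  rw [tileOf_eq hT hx hRT hxR]
  exact ⟨hRT, hxR⟩

lemma sum_over_tiles (hT : IsTiling k T) (hM : Mono f T) :
    ∑ x ∈ Vk k, ((ideal k f x).card : ℚ) / ((tileOf T x).card : ℚ)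
      = ∑ R ∈ T, ((ideal k f (pick R)).card : ℚ) := by
  obtain ⟨h1, h2, h3, h4⟩ := hT
  have hV : Vk k = T.biUnion id := by
    ext x
    simp only [Finset.mem_biUnion, id]
    constructor
    · intro hx; obtain ⟨R, ⟨hR, hxR⟩, -⟩ := h4 x hx; exact ⟨R, hR, hxR⟩
    · rintro ⟨R, hR, hxR⟩; exact h3 R hR hxR
  have hdisj : ∀ R ∈ (T : Set (Finset (ℕ × ℕ))), ∀ S ∈ (T : Set (Finset (ℕ × ℕ))),
      R ≠ S → Disjoint (id R) (id S) := by
    intro R hR S hS hne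
    simp only [id]
    rw [Finset.disjoint_left]
    intro x hxR hxS
    obtain ⟨R₀, -, hu⟩ := h4 x (h3 R hR hxR)
    exact hne ((hu R ⟨hR, hxR⟩).trans (hu S ⟨hS, hxS⟩).symm)
  rw [hV, Finset.sum_biUnion hdisj]
  refine Finset.sum_congr rfl fun R hR => ?_
  have hRsub : R ⊆ Vk k := h3 R hR
  have hRne : R.Nonempty := h2 R hR
  have hpick : pick R ∈ R := pick_mem hRne
  have hcard : (R.card : ℚ) ≠ 0 := by
    exact_mod_cast Finset.card_ne_zero_of_mem hpick
  have : ∀ x ∈ R, ((ideal k f x).card : ℚ) / ((tileOf T x).card : ℚ)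
      = ((ideal k f (pick R)).card : ℚ) / (R.card : ℚ) := by
    intro x hx
    rw [tileOf_eq ⟨h1, h2, h3, h4⟩ (hRsub hx) hR hx,
      ideal_congr (hM R hR x hx (pick R) hpick)]
  calc ∑ x ∈ id R, ((ideal k f x).card : ℚ) / ((tileOf T x).card : ℚ)
      = ∑ _x ∈ R, ((ideal k f (pick R)).card : ℚ) / (R.card : ℚ) :=
        Finset.sum_congr rfl this
    _ = ((ideal k f (pick R)).card : ℚ) := by
        rw [Finset.sum_const, nsmul_eq_mul, mul_div_cancel₀ _ hcard]

end generic

/-! ### Witness sets -/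

def tri (k c : ℕ) : Finset (ℕ × ℕ) := (Vk k).filter fun y => y.1 + y.2 < c

def bandW (c : ℕ) : Finset (ℕ × ℕ) :=
  (Finset.range c ×ˢ Finset.range c).filter fun p => c ≤ p.1 + p.2

def diagW (c : ℕ) : Finset (ℕ × ℕ) := (Finset.range c).image fun i => (i, c - 1 - i)

def rowW (c : ℕ) : Finset (ℕ × ℕ) := (Finset.range c).image fun j => (c, j)

def colW (c : ℕ) : Finset (ℕ × ℕ) := (Finset.range c).image fun j => (j, c)

def Wit (c : ℕ) : Finset (ℕ × ℕ) := diagW c ∪ bandW c ∪ rowW c ∪ colW c ∪ {(c, c)}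

lemma Wit_subset_Vk {k c : ℕ} (hc : c < 2 ^ k) : Wit c ⊆ Vk k := by
  intro w hw
  rw [mem_Vk]
  simp only [Wit, diagW, bandW, rowW, colW, Finset.mem_union, Finset.mem_image,
    Finset.mem_filter, Finset.mem_product, Finset.mem_range, Finset.mem_singleton] at hw
  obtain ⟨w1, w2⟩ := w
  simp only [Prod.mk.injEq] at hw
  rcases hw with ((((⟨i, hi, h1, h2⟩ | ⟨⟨h1, h2⟩, h3⟩) | ⟨j, hj, h1, h2⟩) |
    ⟨j, hj, h1, h2⟩) | ⟨h1, h2⟩) <;> constructor <;> omega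

/-! ### Ideal region computations -/

lemma ideal_diag {k c i : ℕ} (hi : i < c) :
    ideal k (TPG c) (i, c - 1 - i) = tri k c := by
  ext ⟨a, b⟩
  simp only [ideal, tri, Finset.mem_filter, TPG]
  rw [if_pos (by omega : i + (c - 1 - i) < c)]
  constructor
  · rintro ⟨hV, h⟩
    refine ⟨hV, ?_⟩
    by_contra hab
    rw [if_neg hab] at h
    exact Option.some_ne_none _ h
  · rintro ⟨hV, h⟩
    exact ⟨hV, by rw [if_pos h]⟩

lemma ideal_band {k c : ℕ} (hck : c ≤ 2 ^ k) {w : ℕ × ℕ} (hw : w ∈ bandW c) :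
    ideal k (TPG c) w = {w} := by
  obtain ⟨w1, w2⟩ := w
  simp only [bandW, Finset.mem_filter, Finset.mem_product, Finset.mem_range] at hw
  obtain ⟨⟨h1, h2⟩, h3⟩ := hw
  ext ⟨a, b⟩
  simp only [ideal, Finset.mem_filter, Finset.mem_singleton, mem_Vk, TPG, Prod.mk.injEq]
  rw [if_neg (by omega : ¬ w1 + w2 < c)]
  constructor
  · rintro ⟨hV, h⟩
    by_cases hab : a + b < c
    · rw [if_pos hab] at h; exact absurd h (by simp)
    · rw [if_neg hab] at h
      simp only [Option.some.injEq, Prod.mk.injEq] at h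
      omega
  · rintro ⟨rfl, rfl⟩
    rw [if_neg (by omega)]
    exact ⟨⟨by omega, by omega⟩, rfl⟩

lemma ideal_row {k c j : ℕ} (hck : c ≤ 2 ^ k) (hj : j < c) :
    ideal k (TPG c) (c, j) = Finset.Ico c (2 ^ k) ×ˢ {j} := by
  ext ⟨a, b⟩
  simp only [ideal, Finset.mem_filter, mem_Vk, TPG, Finset.mem_product, Finset.mem_Ico,
    Finset.mem_singleton]
  rw [if_neg (by omega : ¬ c + j < c)]
  constructor
  · rintro ⟨hV, h⟩
    by_cases hab : a + b < c
    · rw [if_pos hab] at h; exact absurd h (by simp)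
    · rw [if_neg hab] at h
      simp only [Option.some.injEq, Prod.mk.injEq] at h
      refine ⟨⟨by omega, hV.1⟩, by omega⟩
  · rintro ⟨⟨ha, ha'⟩, rfl⟩
    rw [if_neg (by omega)]
    refine ⟨⟨ha', by omega⟩, by simp only [Option.some.injEq, Prod.mk.injEq, true_and, and_true]; omega⟩

lemma ideal_col {k c j : ℕ} (hck : c ≤ 2 ^ k) (hj : j < c) :
    ideal k (TPG c) (j, c) = {j} ×ˢ Finset.Ico c (2 ^ k) := by
  ext ⟨a, b⟩
  simp only [ideal, Finset.mem_filter, mem_Vk, TPG, Finset.mem_product, Finset.mem_Ico,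
    Finset.mem_singleton]
  rw [if_neg (by omega : ¬ j + c < c)]
  constructor
  · rintro ⟨hV, h⟩
    by_cases hab : a + b < c
    · rw [if_pos hab] at h; exact absurd h (by simp)
    · rw [if_neg hab] at h
      simp only [Option.some.injEq, Prod.mk.injEq] at h
      refine ⟨by omega, ⟨by omega, hV.2⟩⟩
  · rintro ⟨rfl, ⟨hb, hb'⟩⟩
    rw [if_neg (by omega)]
    refine ⟨⟨by omega, hb'⟩, by simp only [Option.some.injEq, Prod.mk.injEq, true_and, and_true]; omega⟩

lemma ideal_corner {k c : ℕ} (hck : c ≤ 2 ^ k) :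
    ideal k (TPG c) (c, c) = Finset.Ico c (2 ^ k) ×ˢ Finset.Ico c (2 ^ k) := by
  ext ⟨a, b⟩
  simp only [ideal, Finset.mem_filter, mem_Vk, TPG, Finset.mem_product, Finset.mem_Ico]
  rw [if_neg (by omega : ¬ c + c < c)]
  constructor
  · rintro ⟨hV, h⟩
    by_cases hab : a + b < c
    · rw [if_pos hab] at h; exact absurd h (by simp)
    · rw [if_neg hab] at h
      simp only [Option.some.injEq, Prod.mk.injEq] at h
      exact ⟨⟨by omega, hV.1⟩, ⟨by omega, hV.2⟩⟩
  · rintro ⟨⟨ha, ha'⟩, ⟨hb, hb'⟩⟩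
    rw [if_neg (by omega)]
    refine ⟨⟨ha', hb'⟩, by simp only [Option.some.injEq, Prod.mk.injEq, true_and, and_true]; omega⟩

/-! ### Cardinalities -/

lemma tri_eq {k c : ℕ} (hck : c ≤ 2 ^ k) :
    tri k c = (Finset.range c).biUnion fun a => {a} ×ˢ Finset.range (c - a) := by
  ext ⟨a, b⟩
  simp only [tri, Finset.mem_filter, mem_Vk, Finset.mem_biUnion, Finset.mem_range,
    Finset.mem_product, Finset.mem_singleton]
  constructor
  · rintro ⟨⟨h1, h2⟩, h3⟩
    exact ⟨a, by omega, rfl, by omega⟩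
  · rintro ⟨i, hi, rfl, hb⟩
    exact ⟨⟨by omega, by omega⟩, by omega⟩

lemma tri_card {k c : ℕ} (hck : c ≤ 2 ^ k) : 2 * (tri k c).card = c * (c + 1) := by
  rw [tri_eq hck, Finset.card_biUnion]
  · have : ∀ a ∈ Finset.range c, ({a} ×ˢ Finset.range (c - a)).card = c - a := by
      intro a _
      simp [Finset.card_product]
    rw [Finset.sum_congr rfl this]
    rw [← Finset.sum_range_reflect (fun a => c - a) c]
    have hcongr : ∑ j ∈ Finset.range c, (c - (c - 1 - j)) = ∑ j ∈ Finset.range c, (j + 1) := by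
      refine Finset.sum_congr rfl fun j hj => ?_
      rw [Finset.mem_range] at hj
      omega
    rw [hcongr]
    have h2 : ∑ j ∈ Finset.range c, (j + 1) = ∑ i ∈ Finset.range (c + 1), i := by
      rw [Finset.sum_range_succ' (fun i => i) c]
      omega
    have h3 := Finset.sum_range_id_mul_two (c + 1)
    simp only [Nat.add_sub_cancel] at h3
    rw [h2]
    linarith [h3]
  · intro a _ b _ hab
    rw [Function.onFun, Finset.disjoint_left]
    rintro ⟨p, q⟩ hp hq
    simp only [Finset.mem_product, Finset.mem_singleton] at hp hq
    exact hab (hp.1.symm.trans hq.1)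

lemma band_card {k c : ℕ} (hck : c ≤ 2 ^ k) :
    (bandW c).card + (tri k c).card = c * c := by
  have htri : tri k c = (Finset.range c ×ˢ Finset.range c).filter fun p => ¬ c ≤ p.1 + p.2 := by
    ext ⟨a, b⟩
    simp only [tri, Finset.mem_filter, mem_Vk, Finset.mem_product, Finset.mem_range, not_le]
    constructor
    · rintro ⟨⟨h1, h2⟩, h3⟩; exact ⟨⟨by omega, by omega⟩, h3⟩
    · rintro ⟨⟨h1, h2⟩, h3⟩; exact ⟨⟨by omega, by omega⟩, h3⟩
  rw [bandW, htri, Finset.card_filter_add_card_filter_not,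
    Finset.card_product, Finset.card_range]

/-! ### The diagonal separation argument -/

lemma diag_sep {k c : ℕ} {T : Finset (Finset (ℕ × ℕ))} (hT : IsTiling k T)
    (hM : Mono (TPG c) T) {R : Finset (ℕ × ℕ)} (hR : R ∈ T) {i j : ℕ}
    (hij : i < j) (hj : j < c) (hiR : (i, c - 1 - i) ∈ R) (hjR : (j, c - 1 - j) ∈ R) :
    False := by
  obtain ⟨S, S', rfl⟩ := hT.1 R hR
  have hi' := Finset.mem_product.mp hiR
  have hj' := Finset.mem_product.mp hjR
  have hp : (j, c - 1 - i) ∈ S ×ˢ S' := Finset.mem_product.mpr ⟨hj'.1, hi'.2⟩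
  have hmono := hM _ hR _ hiR _ hp
  rw [TPG, TPG, if_pos (by omega : i + (c - 1 - i) < c),
    if_neg (by omega : ¬ (j + (c - 1 - i) < c))] at hmono
  exact Option.some_ne_none _ hmono.symm

/-! ### Value-based recovery of witnesses -/

def recov (c : ℕ) (v : ℕ × ℕ) : ℕ × ℕ :=
  (if v.2 = 0 then c else c - v.2, if v.1 = 0 then c else c - v.1)

lemma wit_val {c : ℕ} {w : ℕ × ℕ} (hw : w ∈ Wit c) :
    (∃ i, i < c ∧ w = (i, c - 1 - i)) ∨ ∃ v, TPG c w = some v ∧ recov c v = w := by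
  simp only [Wit, diagW, bandW, rowW, colW, Finset.mem_union, Finset.mem_image,
    Finset.mem_filter, Finset.mem_product, Finset.mem_range, Finset.mem_singleton] at hw
  rcases hw with ((((⟨i, hi, hweq⟩ | ⟨⟨h1, h2⟩, h3⟩) | ⟨j, hj, hweq⟩) |
    ⟨j, hj, hweq⟩) | hweq)
  · exact Or.inl ⟨i, hi, hweq.symm⟩
  · refine Or.inr ⟨(c - w.2, c - w.1), ?_, ?_⟩
    · rw [TPG, if_neg (by omega)]
    · obtain ⟨w1, w2⟩ := w
      simp only [recov, Prod.mk.injEq]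
      constructor <;> split_ifs <;> omega
  · subst hweq
    refine Or.inr ⟨(c - j, c - c), ?_, ?_⟩
    · rw [TPG, if_neg (by omega)]
    · simp only [recov, Prod.mk.injEq]
      constructor <;> split_ifs <;> omega
  · subst hweq
    refine Or.inr ⟨(c - c, c - j), ?_, ?_⟩
    · rw [TPG, if_neg (by omega)]
    · simp only [recov, Prod.mk.injEq]
      constructor <;> split_ifs <;> omega
  · subst hweq
    refine Or.inr ⟨(c - c, c - c), ?_, ?_⟩
    · rw [TPG, if_neg (by omega)]
    · simp only [recov, Prod.mk.injEq]
      constructor <;> split_ifs <;> omega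

lemma TPG_diag_eq_none {c i : ℕ} (hi : i < c) : TPG c (i, c - 1 - i) = none := by
  rw [TPG, if_pos (by omega : i + (c - 1 - i) < c)]

lemma injOn_tileOf {k c : ℕ} {T : Finset (Finset (ℕ × ℕ))} (hc : c < 2 ^ k)
    (hT : IsTiling k T) (hM : Mono (TPG c) T) :
    ∀ w ∈ Wit c, ∀ w' ∈ Wit c, tileOf T w = tileOf T w' → w = w' := by
  intro w hw w' hw' heq
  have hwV : w ∈ Vk k := Wit_subset_Vk hc hw
  have hwV' : w' ∈ Vk k := Wit_subset_Vk hc hw'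
  obtain ⟨hRT, hwR⟩ := tileOf_mem hT hwV
  obtain ⟨hRT', hwR'⟩ := tileOf_mem hT hwV'
  rw [← heq] at hwR'
  have hval : TPG c w = TPG c w' := hM _ hRT _ hwR _ hwR'
  rcases wit_val hw with ⟨i, hi, rfl⟩ | ⟨v, hv, hrv⟩
  · rcases wit_val hw' with ⟨j, hj, rfl⟩ | ⟨v', hv', hrv'⟩
    · rcases Nat.lt_trichotomy i j with h | h | h
      · exact (diag_sep hT hM hRT h hj hwR hwR').elim
      · rw [h]
      · exact (diag_sep hT hM hRT h hi hwR' hwR).elim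
    · rw [TPG_diag_eq_none hi, hv'] at hval
      exact absurd hval.symm (Option.some_ne_none _)
  · rcases wit_val hw' with ⟨j, hj, rfl⟩ | ⟨v', hv', hrv'⟩
    · rw [TPG_diag_eq_none hj, hv] at hval
      exact absurd hval (Option.some_ne_none _)
    · rw [hv, hv'] at hval
      rw [← hrv, ← hrv', Option.some_inj.mp hval]

/-! ### The optimal tiling -/

def tileMap (k c : ℕ) (x : ℕ × ℕ) : Finset (ℕ × ℕ) :=
  if x.1 + x.2 < c then {x.1} ×ˢ Finset.range (c - x.1)
  else if x.1 < c ∧ x.2 < c then {x}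
  else if x.2 < c then Finset.Ico c (2 ^ k) ×ˢ {x.2}
  else if x.1 < c then {x.1} ×ˢ Finset.Ico c (2 ^ k)
  else Finset.Ico c (2 ^ k) ×ˢ Finset.Ico c (2 ^ k)

def Topt (k c : ℕ) : Finset (Finset (ℕ × ℕ)) := (Vk k).image (tileMap k c)

lemma mem_tileMap_self {k c : ℕ} {x : ℕ × ℕ} (hx : x ∈ Vk k) : x ∈ tileMap k c x := by
  obtain ⟨x1, x2⟩ := x
  rw [mem_Vk] at hx
  simp only [tileMap]
  split_ifs with h1 h2 h3 h4 <;>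
    simp only [Finset.mem_product, Finset.mem_singleton, Finset.mem_range, Finset.mem_Ico,
      Prod.mk.injEq, true_and, and_true, and_self, eq_self_iff_true] <;> omega

lemma tileMap_subset {k c : ℕ} (hck : c ≤ 2 ^ k) {x : ℕ × ℕ} (hx : x ∈ Vk k) :
    tileMap k c x ⊆ Vk k := by
  obtain ⟨x1, x2⟩ := x
  rw [mem_Vk] at hx
  intro ⟨a, b⟩ hab
  rw [mem_Vk]
  simp only [tileMap] at hab
  split_ifs at hab <;>
    simp only [Finset.mem_product, Finset.mem_singleton, Finset.mem_range,
      Finset.mem_Ico, Prod.mk.injEq] at hab <;>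
    constructor <;> omega

lemma tileMap_coherent {k c : ℕ} {x y : ℕ × ℕ} (hy : y ∈ Vk k)
    (hx : x ∈ tileMap k c y) : tileMap k c x = tileMap k c y := by
  obtain ⟨x1, x2⟩ := x
  obtain ⟨y1, y2⟩ := y
  rw [mem_Vk] at hy
  simp only [tileMap] at hx ⊢
  split_ifs at hx with h1 h2 h3 h4
  · simp only [Finset.mem_product, Finset.mem_singleton, Finset.mem_range] at hx
    obtain ⟨rfl, hx2⟩ := hx
    rw [if_pos (by omega : x1 + x2 < c), if_pos h1]
  · simp only [Finset.mem_singleton, Prod.mk.injEq] at hx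
    obtain ⟨rfl, rfl⟩ := hx
    rw [if_neg h1, if_pos h2]
  · simp only [Finset.mem_product, Finset.mem_singleton, Finset.mem_Ico] at hx
    obtain ⟨⟨hx1, hx1'⟩, rfl⟩ := hx
    rw [if_neg (by omega), if_neg (by omega), if_pos h3, if_neg h1, if_neg h2, if_pos h3]
  · simp only [Finset.mem_product, Finset.mem_singleton, Finset.mem_Ico] at hx
    obtain ⟨rfl, hx2, hx2'⟩ := hx
    rw [if_neg (by omega), if_neg (by omega), if_neg (by omega), if_pos h4, if_neg h1,
      if_neg h2, if_neg h3]
  · simp only [Finset.mem_product, Finset.mem_Ico] at hx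
    obtain ⟨⟨hx1, hx1'⟩, hx2, hx2'⟩ := hx
    rw [if_neg (by omega), if_neg (by omega), if_neg (by omega), if_neg (by omega),
      if_neg h1, if_neg h2, if_neg h3, if_neg h4]

lemma tileMap_val {k c : ℕ} {x y : ℕ × ℕ} (hy : y ∈ Vk k)
    (hx : x ∈ tileMap k c y) : TPG c x = TPG c y := by
  obtain ⟨x1, x2⟩ := x
  obtain ⟨y1, y2⟩ := y
  rw [mem_Vk] at hy
  simp only [tileMap] at hx
  simp only [TPG]
  split_ifs at hx with h1 h2 h3 h4 <;>
    simp only [Finset.mem_product, Finset.mem_singleton, Finset.mem_range,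
      Finset.mem_Ico, Prod.mk.injEq] at hx
  · obtain ⟨rfl, hx2⟩ := hx
    rw [if_pos (by omega : x1 + x2 < c), if_pos h1]
  · obtain ⟨rfl, rfl⟩ := hx
    rfl
  · obtain ⟨⟨hx1, hx1'⟩, rfl⟩ := hx
    rw [if_neg (by omega), if_neg (by omega)]
    simp only [Option.some.injEq, Prod.mk.injEq, true_and, and_true]
    omega
  · obtain ⟨rfl, hx2, hx2'⟩ := hx
    rw [if_neg (by omega), if_neg (by omega)]
    simp only [Option.some.injEq, Prod.mk.injEq, true_and, and_true]
    omega
  · obtain ⟨⟨hx1, hx1'⟩, hx2, hx2'⟩ := hx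
    rw [if_neg (by omega), if_neg (by omega)]
    simp only [Option.some.injEq, Prod.mk.injEq, true_and, and_true]
    omega

lemma Topt_isTiling {k c : ℕ} (hck : c ≤ 2 ^ k) : IsTiling k (Topt k c) := by
  refine ⟨?_, ?_, ?_, ?_⟩
  · intro R hR
    obtain ⟨y, hy, rfl⟩ := Finset.mem_image.mp hR
    unfold tileMap
    split_ifs
    · exact ⟨{y.1}, Finset.range (c - y.1), rfl⟩
    · exact ⟨{y.1}, {y.2}, by rw [Finset.singleton_product_singleton]⟩
    · exact ⟨Finset.Ico c (2 ^ k), {y.2}, rfl⟩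
    · exact ⟨{y.1}, Finset.Ico c (2 ^ k), rfl⟩
    · exact ⟨Finset.Ico c (2 ^ k), Finset.Ico c (2 ^ k), rfl⟩
  · intro R hR
    obtain ⟨y, hy, rfl⟩ := Finset.mem_image.mp hR
    exact ⟨y, mem_tileMap_self hy⟩
  · intro R hR
    obtain ⟨y, hy, rfl⟩ := Finset.mem_image.mp hR
    exact tileMap_subset hck hy
  · intro x hx
    refine ⟨tileMap k c x, ⟨Finset.mem_image_of_mem _ hx, mem_tileMap_self hx⟩, ?_⟩
    rintro R ⟨hR, hxR⟩
    obtain ⟨y, hy, rfl⟩ := Finset.mem_image.mp hR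
    exact (tileMap_coherent hy hxR).symm

lemma Topt_mono {k c : ℕ} : Mono (TPG c) (Topt k c) := by
  intro R hR x hx y hy
  obtain ⟨z, hz, rfl⟩ := Finset.mem_image.mp hR
  rw [tileMap_val hz hx, tileMap_val hz hy]

lemma Topt_eq_image_wit {k c : ℕ} (hc : c < 2 ^ k) :
    Topt k c = (Wit c).image (tileMap k c) := by
  apply Finset.Subset.antisymm
  · intro R hR
    obtain ⟨x, hxV, rfl⟩ := Finset.mem_image.mp hR
    rw [Finset.mem_image]
    obtain ⟨x1, x2⟩ := x
    rw [mem_Vk] at hxV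
    have hxV' : ((x1 : ℕ), x2) ∈ Vk k := mem_Vk.mpr hxV
    by_cases h1 : x1 + x2 < c
    · refine ⟨(x1, c - 1 - x1), ?_, ?_⟩
      · simp only [Wit, diagW, Finset.mem_union, Finset.mem_image, Finset.mem_range]
        exact Or.inl (Or.inl (Or.inl (Or.inl ⟨x1, by omega, rfl⟩)))
      · refine tileMap_coherent hxV' ?_
        simp only [tileMap]
        rw [if_pos h1]
        simp only [Finset.mem_product, Finset.mem_singleton, Finset.mem_range, true_and]
        omega
    · by_cases h2 : x1 < c ∧ x2 < c
      · refine ⟨(x1, x2), ?_, rfl⟩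
        simp only [Wit, bandW, Finset.mem_union, Finset.mem_filter, Finset.mem_product,
          Finset.mem_range]
        exact Or.inl (Or.inl (Or.inl (Or.inr ⟨⟨h2.1, h2.2⟩, by omega⟩)))
      · by_cases h3 : x2 < c
        · refine ⟨(c, x2), ?_, ?_⟩
          · simp only [Wit, rowW, Finset.mem_union, Finset.mem_image, Finset.mem_range]
            exact Or.inl (Or.inl (Or.inr ⟨x2, h3, rfl⟩))
          · refine tileMap_coherent hxV' ?_
            simp only [tileMap]
            rw [if_neg h1, if_neg h2, if_pos h3]
            simp only [Finset.mem_product, Finset.mem_singleton, Finset.mem_Ico, and_true]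
            omega
        · by_cases h4 : x1 < c
          · refine ⟨(x1, c), ?_, ?_⟩
            · simp only [Wit, colW, Finset.mem_union, Finset.mem_image, Finset.mem_range]
              exact Or.inl (Or.inr ⟨x1, h4, rfl⟩)
            · refine tileMap_coherent hxV' ?_
              simp only [tileMap]
              rw [if_neg h1, if_neg h2, if_neg h3, if_pos h4]
              simp only [Finset.mem_product, Finset.mem_singleton, Finset.mem_Ico, true_and]
              omega
          · refine ⟨(c, c), ?_, ?_⟩
            · simp only [Wit, Finset.mem_union, Finset.mem_singleton]
              exact Or.inr trivial
            · refine tileMap_coherent hxV' ?_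
              simp only [tileMap]
              rw [if_neg h1, if_neg h2, if_neg h3, if_neg h4]
              simp only [Finset.mem_product, Finset.mem_Ico]
              omega
  · exact Finset.image_subset_image (Wit_subset_Vk hc)

/-! ### Summing ideal sizes over the witness set -/

lemma sum_wit {k c : ℕ} (hck : c ≤ 2 ^ k) :
    ∑ w ∈ Wit c, ((ideal k (TPG c) w).card : ℚ)
      = 2 ^ (2 * k) + ((c : ℚ) ^ 3 - c) / 2 := by
  have hd1 : Disjoint (diagW c) (bandW c) := by
    rw [Finset.disjoint_left]
    rintro p hp hq
    obtain ⟨i, hi, rfl⟩ := Finset.mem_image.mp hp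
    rw [Finset.mem_range] at hi
    simp only [bandW, Finset.mem_filter, Finset.mem_product, Finset.mem_range] at hq
    omega
  have hd2 : Disjoint (diagW c ∪ bandW c) (rowW c) := by
    rw [Finset.disjoint_left]
    rintro p hp hq
    obtain ⟨j, hj, rfl⟩ := Finset.mem_image.mp hq
    rw [Finset.mem_range] at hj
    rcases Finset.mem_union.mp hp with h | h
    · obtain ⟨i, hi, heq⟩ := Finset.mem_image.mp h
      rw [Finset.mem_range] at hi
      rw [Prod.mk.injEq] at heq
      omega
    · simp only [bandW, Finset.mem_filter, Finset.mem_product, Finset.mem_range] at h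
      omega
  have hd3 : Disjoint (diagW c ∪ bandW c ∪ rowW c) (colW c) := by
    rw [Finset.disjoint_left]
    rintro p hp hq
    obtain ⟨j, hj, rfl⟩ := Finset.mem_image.mp hq
    rw [Finset.mem_range] at hj
    rcases Finset.mem_union.mp hp with h | h
    · rcases Finset.mem_union.mp h with h' | h'
      · obtain ⟨i, hi, heq⟩ := Finset.mem_image.mp h'
        rw [Finset.mem_range] at hi
        rw [Prod.mk.injEq] at heq
        omega
      · simp only [bandW, Finset.mem_filter, Finset.mem_product, Finset.mem_range] at h'
        omega
    · obtain ⟨i, hi, heq⟩ := Finset.mem_image.mp h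
      rw [Finset.mem_range] at hi
      rw [Prod.mk.injEq] at heq
      omega
  have hd4 : Disjoint (diagW c ∪ bandW c ∪ rowW c ∪ colW c) ({((c : ℕ), c)} : Finset (ℕ × ℕ)) := by
    rw [Finset.disjoint_right]
    rintro p hp hq
    rw [Finset.mem_singleton] at hp
    subst hp
    rcases Finset.mem_union.mp hq with h | h
    · rcases Finset.mem_union.mp h with h' | h'
      · rcases Finset.mem_union.mp h' with h'' | h''
        · obtain ⟨i, hi, heq⟩ := Finset.mem_image.mp h''
          rw [Finset.mem_range] at hi
          rw [Prod.mk.injEq] at heq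
          omega
        · simp only [bandW, Finset.mem_filter, Finset.mem_product, Finset.mem_range] at h''
          omega
      · obtain ⟨i, hi, heq⟩ := Finset.mem_image.mp h'
        rw [Finset.mem_range] at hi
        rw [Prod.mk.injEq] at heq
        omega
    · obtain ⟨i, hi, heq⟩ := Finset.mem_image.mp h
      rw [Finset.mem_range] at hi
      rw [Prod.mk.injEq] at heq
      omega
  rw [Wit, Finset.sum_union hd4, Finset.sum_union hd3, Finset.sum_union hd2,
    Finset.sum_union hd1]
  have hdiag : ∑ w ∈ diagW c, ((ideal k (TPG c) w).card : ℚ)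
      = (c : ℚ) * ((tri k c).card : ℚ) := by
    rw [diagW, Finset.sum_image (by
      intro i hi j hj h
      rw [Prod.mk.injEq] at h
      exact h.1)]
    rw [Finset.sum_congr rfl fun i hi => by
      rw [ideal_diag (Finset.mem_range.mp hi)]]
    rw [Finset.sum_const, Finset.card_range, nsmul_eq_mul]
  have hband : ∑ w ∈ bandW c, ((ideal k (TPG c) w).card : ℚ) = ((bandW c).card : ℚ) := by
    rw [Finset.sum_congr rfl fun w hw => by
      rw [ideal_band hck hw, Finset.card_singleton]]
    rw [Finset.sum_const, nsmul_eq_mul, Nat.cast_one, mul_one]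
  have hrowcard : ∀ j : ℕ, (Finset.Ico c (2 ^ k) ×ˢ ({j} : Finset ℕ)).card = 2 ^ k - c := by
    intro j
    rw [Finset.card_product, Nat.card_Ico, Finset.card_singleton, mul_one]
  have hcolcard : ∀ j : ℕ, (({j} : Finset ℕ) ×ˢ Finset.Ico c (2 ^ k)).card = 2 ^ k - c := by
    intro j
    rw [Finset.card_product, Nat.card_Ico, Finset.card_singleton, one_mul]
  have hrow : ∑ w ∈ rowW c, ((ideal k (TPG c) w).card : ℚ)
      = (c : ℚ) * ((2 ^ k - c : ℕ) : ℚ) := by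
    rw [rowW, Finset.sum_image (by
      intro i hi j hj h
      rw [Prod.mk.injEq] at h
      exact h.2)]
    rw [Finset.sum_congr rfl fun j hj => by
      rw [ideal_row hck (Finset.mem_range.mp hj), hrowcard j]]
    rw [Finset.sum_const, Finset.card_range, nsmul_eq_mul]
  have hcol : ∑ w ∈ colW c, ((ideal k (TPG c) w).card : ℚ)
      = (c : ℚ) * ((2 ^ k - c : ℕ) : ℚ) := by
    rw [colW, Finset.sum_image (by
      intro i hi j hj h
      rw [Prod.mk.injEq] at h
      exact h.1)]
    rw [Finset.sum_congr rfl fun j hj => by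
      rw [ideal_col hck (Finset.mem_range.mp hj), hcolcard j]]
    rw [Finset.sum_const, Finset.card_range, nsmul_eq_mul]
  have hcorner : ∑ w ∈ ({((c : ℕ), c)} : Finset (ℕ × ℕ)), ((ideal k (TPG c) w).card : ℚ)
      = ((2 ^ k - c : ℕ) : ℚ) * ((2 ^ k - c : ℕ) : ℚ) := by
    rw [Finset.sum_singleton, ideal_corner hck, Finset.card_product, Nat.card_Ico,
      Nat.cast_mul]
  rw [hdiag, hband, hrow, hcol, hcorner]
  have h2t : 2 * ((tri k c).card : ℚ) = (c : ℚ) * ((c : ℚ) + 1) := by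
    have h := congrArg (Nat.cast (R := ℚ)) (tri_card (k := k) (c := c) hck)
    push_cast at h
    linarith
  have hbandc : ((bandW c).card : ℚ) = (c : ℚ) * (c : ℚ) - ((tri k c).card : ℚ) := by
    have := band_card (k := k) (c := c) hck
    have h' : ((bandW c).card : ℚ) + ((tri k c).card : ℚ) = (c : ℚ) * (c : ℚ) := by
      exact_mod_cast congrArg (Nat.cast (R := ℚ)) this
    linarith
  have hm : ((2 ^ k - c : ℕ) : ℚ) = (2 : ℚ) ^ k - (c : ℚ) := by
    push_cast [hck]
    ring
  have hpow : (2 : ℚ) ^ (2 * k) = ((2 : ℚ) ^ k) ^ 2 := by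
    rw [mul_comm 2 k, pow_mul]
  rw [hbandc, hm, hpow]
  linear_combination (((c : ℚ) - 1) / 2) * h2t

/-! ### Main theorem pieces -/

lemma avg_Topt {k c : ℕ} (hc : c < 2 ^ k) :
    avgObjPAR k (TPG c) (Topt k c) = 1 + ((c : ℚ) ^ 3 - c) / 2 ^ (2 * k + 1) := by
  have hck : c ≤ 2 ^ k := le_of_lt hc
  rw [avgObjPAR, sum_over_tiles (Topt_isTiling hck) Topt_mono]
  have himg : ∑ R ∈ Topt k c, ((ideal k (TPG c) (pick R)).card : ℚ)
      = ∑ w ∈ Wit c, ((ideal k (TPG c) w).card : ℚ) := by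
    rw [Topt_eq_image_wit hc]
    rw [Finset.sum_image (by
      intro w hw w' hw' heq
      have hwV := Wit_subset_Vk hc hw
      have hwV' := Wit_subset_Vk hc hw'
      have e1 : tileOf (Topt k c) w = tileMap k c w :=
        tileOf_eq (Topt_isTiling hck) hwV (Finset.mem_image_of_mem _ hwV)
          (mem_tileMap_self hwV)
      have e2 : tileOf (Topt k c) w' = tileMap k c w' :=
        tileOf_eq (Topt_isTiling hck) hwV' (Finset.mem_image_of_mem _ hwV')
          (mem_tileMap_self hwV')
      exact injOn_tileOf hc (Topt_isTiling hck) Topt_mono w hw w' hw'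
        (by rw [e1, e2, heq]))]
    refine Finset.sum_congr rfl fun w hw => ?_
    have hwV := Wit_subset_Vk hc hw
    rw [ideal_congr (tileMap_val hwV (pick_mem ⟨w, mem_tileMap_self hwV⟩))]
  rw [himg, sum_wit hck]
  have h0 : ((2 : ℚ) ^ (2 * k)) ≠ 0 := by positivity
  have h1 : ((2 : ℚ) ^ (2 * k + 1)) ≠ 0 := by positivity
  field_simp
  ring

lemma lower_bound {k c : ℕ} (hc : c < 2 ^ k) {T : Finset (Finset (ℕ × ℕ))}
    (hT : IsTiling k T) (hM : Mono (TPG c) T) :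
    1 + ((c : ℚ) ^ 3 - c) / 2 ^ (2 * k + 1) ≤ avgObjPAR k (TPG c) T := by
  have hck : c ≤ 2 ^ k := le_of_lt hc
  rw [avgObjPAR, sum_over_tiles hT hM]
  have hsub : (Wit c).image (tileOf T) ⊆ T := by
    intro R hR
    obtain ⟨w, hw, rfl⟩ := Finset.mem_image.mp hR
    exact (tileOf_mem hT (Wit_subset_Vk hc hw)).1
  have h1 : ∑ R ∈ (Wit c).image (tileOf T), ((ideal k (TPG c) (pick R)).card : ℚ)
      = ∑ w ∈ Wit c, ((ideal k (TPG c) w).card : ℚ) := by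
    rw [Finset.sum_image (injOn_tileOf hc hT hM)]
    refine Finset.sum_congr rfl fun w hw => ?_
    have hwV := Wit_subset_Vk hc hw
    obtain ⟨hRT, hwR⟩ := tileOf_mem hT hwV
    rw [ideal_congr (hM _ hRT _ (pick_mem (hT.2.1 _ hRT)) _ hwR)]
  have hineq : ∑ w ∈ Wit c, ((ideal k (TPG c) w).card : ℚ)
      ≤ ∑ R ∈ T, ((ideal k (TPG c) (pick R)).card : ℚ) := by
    rw [← h1]
    exact Finset.sum_le_sum_of_subset_of_nonneg hsub (by
      intro R _ _
      positivity)
  have key : (1 : ℚ) + ((c : ℚ) ^ 3 - c) / 2 ^ (2 * k + 1)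
      = (∑ w ∈ Wit c, ((ideal k (TPG c) w).card : ℚ)) / 2 ^ (2 * k) := by
    rw [sum_wit hck]
    have h0 : ((2 : ℚ) ^ (2 * k)) ≠ 0 := by positivity
    have h1 : ((2 : ℚ) ^ (2 * k + 1)) ≠ 0 := by positivity
    field_simp
    ring
  rw [key]
  exact div_le_div_of_nonneg_right hineq (by positivity)

end Stmt7Aux

/-- the minimum over all `TPG_{k,c}`-monochromatic tilings of `V`
of the average-case objective PAR equals `1 + (c³ − c)/2^{2k+1}`. -/
theorem stmt7 (k c : ℕ) (hk : 1 ≤ k) (hc : c ≤ 2 ^ k - 1) :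
    IsLeast
      {a : ℚ | ∃ T : Finset (Finset (ℕ × ℕ)),
        IsTiling k T ∧ Mono (TPG c) T ∧ avgObjPAR k (TPG c) T = a}
      (1 + ((c : ℚ) ^ 3 - c) / 2 ^ (2 * k + 1)) := by
  have hn1 : (1 : ℕ) ≤ 2 ^ k := Nat.one_le_two_pow
  have hc' : c < 2 ^ k := by omega
  constructor
  · exact ⟨Stmt7Aux.Topt k c, Stmt7Aux.Topt_isTiling (le_of_lt hc'), Stmt7Aux.Topt_mono,
      Stmt7Aux.avg_Topt hc'⟩
  · rintro a ⟨T, hT, hM, rfl⟩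
    exact Stmt7Aux.lower_bound hc' hT hM
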